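/- Let Γ be a connected bipartite (k,ℓ)-semiregular graph and Δ a connected bipartite (k̄,ℓ̄)-semiregular graph. If Γ and Δ are cospectral (same adjacency spectrum with multiplicities) and (k,ℓ) ≠ (k̄,ℓ̄), then k = ℓ̄ and ℓ = k̄. -/

import Mathlib

open Matrix Polynomial Finset

private lemma evalCharpoly {n : Type} [Fintype n] [DecidableEq n] (M : Matrix n n ℝ) (r : ℝ) :
    M.charpoly.eval r = (r • (1 : Matrix n n ℝ) - M).det := by
  rw [Matrix.charpoly, show (Polynomial.eval r (charmatrix M).det) =
      ((evalRingHom r) (charmatrix M).det) from rfl, RingHom.map_det]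
  congr 1
  ext i j
  by_cases h : i = j
  · subst h; simp [charmatrix_apply_eq, Matrix.sub_apply, Matrix.smul_apply, Matrix.one_apply]
  · simp [charmatrix_apply_ne _ _ _ h, Matrix.sub_apply, Matrix.smul_apply, Matrix.one_apply_ne h]

private lemma charpolyConj {n : Type} [Fintype n] [DecidableEq n] (U D : Matrix n n ℝ)
    (hU : U * star U = 1) (hU' : star U * U = 1) :
    (U * D * star U).charpoly = D.charpoly := by
  unfold Matrix.charpoly
  have key : charmatrix (U * D * star U) =
      (U.map C) * charmatrix D * ((star U).map C) := by
    unfold charmatrix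
    rw [mul_sub, sub_mul, RingHom.mapMatrix_apply, RingHom.mapMatrix_apply]
    congr 1
    · rw [← Matrix.scalar_commute (X : ℝ[X]) (fun M => (Commute.all X M)) (U.map C),
        mul_assoc, ← Matrix.map_mul, hU]
      simp
    · rw [← Matrix.map_mul, ← Matrix.map_mul]
  rw [key, det_mul, det_mul, mul_comm, ← mul_assoc, ← det_mul, ← Matrix.map_mul, hU']
  simp

private lemma charpolyDiag {n : Type} [Fintype n] [DecidableEq n] (d : n → ℝ) :
    (Matrix.diagonal d).charpoly = ∏ i, (X - C (d i)) := by
  unfold Matrix.charpoly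
  have : charmatrix (Matrix.diagonal d) = Matrix.diagonal (fun i => X - C (d i)) := by
    ext i j
    by_cases h : i = j
    · subst h; simp
    · simp [charmatrix_apply_ne _ _ _ h, Matrix.diagonal_apply_ne _ h]
  rw [this, det_diagonal]

private lemma charpolyHerm {n : Type} [Fintype n] [DecidableEq n] {A : Matrix n n ℝ}
    (hA : A.IsHermitian) : A.charpoly = ∏ i, (X - C (hA.eigenvalues i)) := by
  have h1 : ((hA.eigenvectorUnitary : Matrix n n ℝ)) *
      star (hA.eigenvectorUnitary : Matrix n n ℝ) = 1 :=
    (Matrix.mem_unitaryGroup_iff).mp (hA.eigenvectorUnitary).2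
  have h2 : star (hA.eigenvectorUnitary : Matrix n n ℝ) *
      (hA.eigenvectorUnitary : Matrix n n ℝ) = 1 :=
    (Matrix.mem_unitaryGroup_iff').mp (hA.eigenvectorUnitary).2
  conv_lhs => rw [hA.spectral_theorem, Unitary.conjStarAlgAut_apply]
  rw [charpolyConj _ _ h1 h2]
  have : (RCLike.ofReal ∘ hA.eigenvalues : n → ℝ) = hA.eigenvalues := by
    ext i; simp
  rw [this, charpolyDiag]

private lemma traceSqHerm {n : Type} [Fintype n] [DecidableEq n] {A : Matrix n n ℝ}
    (hA : A.IsHermitian) : (A * A).trace = ∑ i, (hA.eigenvalues i)^2 := by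
  have h2 : star (hA.eigenvectorUnitary : Matrix n n ℝ) *
      (hA.eigenvectorUnitary : Matrix n n ℝ) = 1 :=
    (Matrix.mem_unitaryGroup_iff').mp (hA.eigenvectorUnitary).2
  have hd : (RCLike.ofReal ∘ hA.eigenvalues : n → ℝ) = hA.eigenvalues := by ext i; simp
  conv_lhs => rw [hA.spectral_theorem, Unitary.conjStarAlgAut_apply, hd]
  set U := (hA.eigenvectorUnitary : Matrix n n ℝ)
  set D := Matrix.diagonal hA.eigenvalues
  have : (U * D * star U) * (U * D * star U) = U * (D * D) * star U := by
    rw [show U * D * star U * (U * D * star U) = U * D * (star U * U) * D * star U by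
      noncomm_ring, h2]
    noncomm_ring
  rw [this, Matrix.trace_mul_cycle, ← mul_assoc, h2, one_mul, Matrix.diagonal_mul_diagonal,
    Matrix.trace_diagonal]
  simp [sq]

private lemma perronBound {n : Type} [Fintype n] (A : Matrix n n ℝ)
    (hAt : Aᵀ = A) (hnn : ∀ i j, 0 ≤ A i j)
    {x : n → ℝ} (hx : ∀ i, 0 < x i) {c : ℝ} (hAx : A *ᵥ x = c • x)
    {μ : ℝ} {y : n → ℝ} (hy : y ≠ 0) (hAy : A *ᵥ y = μ • y) : |μ| ≤ c := by
  set z : n → ℝ := fun i => |y i| with hz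
  have hzle : ∀ i, |μ| * z i ≤ (A *ᵥ z) i := by
    intro i
    have : |μ| * z i = |(A *ᵥ y) i| := by rw [hAy]; simp [hz, abs_mul]
    rw [this]
    calc |(A *ᵥ y) i| ≤ ∑ j, |A i j * y j| := by
            simpa [Matrix.mulVec, dotProduct] using Finset.abs_sum_le_sum_abs (fun j => A i j * y j) Finset.univ
      _ = (A *ᵥ z) i := by
            simp [Matrix.mulVec, dotProduct, abs_mul, abs_of_nonneg (hnn i _), hz]
  have h1 : |μ| * (x ⬝ᵥ z) ≤ x ⬝ᵥ (A *ᵥ z) := by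
    rw [dotProduct, dotProduct, Finset.mul_sum]
    apply Finset.sum_le_sum
    intro i _
    rw [show |μ| * (x i * z i) = x i * (|μ| * z i) by ring]
    exact mul_le_mul_of_nonneg_left (hzle i) (hx i).le
  have h2 : x ⬝ᵥ (A *ᵥ z) = c * (x ⬝ᵥ z) := by
    rw [Matrix.dotProduct_mulVec, ← Matrix.mulVec_transpose, hAt, hAx]
    simp [smul_dotProduct]
  have hxz : 0 < x ⬝ᵥ z := by
    obtain ⟨i0, hi0⟩ := Function.ne_iff.mp hy
    apply Finset.sum_pos' (fun i _ => mul_nonneg (hx i).le (abs_nonneg _))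
    exact ⟨i0, Finset.mem_univ _, mul_pos (hx i0) (abs_pos.mpr hi0)⟩
  rw [h2] at h1
  nlinarith [h1, hxz]

private lemma sideFacts {V : Type} [Fintype V] [DecidableEq V]
    (G : SimpleGraph V) [DecidableRel G.Adj] (hconn : G.Connected)
    (X' : Set V) (hX : X'.Nonempty) (hXc : X'ᶜ.Nonempty)
    (hbip : ∀ u v, G.Adj u v → (u ∈ X' ↔ v ∉ X'))
    (k ℓ : ℕ) (hk : ∀ v ∈ X', G.degree v = k) (hl : ∀ v, v ∉ X' → G.degree v = ℓ) :
    ∃ p q : ℕ, 1 ≤ p ∧ 1 ≤ q ∧ p + q = Fintype.card V ∧ k * p = ℓ * q ∧ 1 ≤ k ∧ 1 ≤ ℓ ∧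
      ((G.adjMatrix ℝ) * (G.adjMatrix ℝ)).trace = (k * p + ℓ * q : ℕ) ∧
      (G.adjMatrix ℝ).charpoly.eval (Real.sqrt ((k : ℝ) * ℓ)) = 0 ∧
      (∀ μ : ℝ, (G.adjMatrix ℝ).charpoly.eval μ = 0 → |μ| ≤ Real.sqrt ((k : ℝ) * ℓ)) := by
  classical
  obtain ⟨u0, hu0⟩ := hX
  obtain ⟨w0, hw0⟩ := hXc
  rw [Set.mem_compl_iff] at hw0
  have hne0 : u0 ≠ w0 := fun h => hw0 (h ▸ hu0)
  have hadj : ∀ v w : V, v ≠ w → ∃ z, G.Adj v z := by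
    intro v w hvw
    obtain ⟨wk⟩ := hconn.preconnected v w
    cases wk with
    | nil => exact absurd rfl hvw
    | cons h _ => exact ⟨_, h⟩
  have hk1 : 1 ≤ k := by
    rw [← hk u0 hu0]
    exact G.degree_pos_iff_exists_adj u0 |>.mpr (hadj u0 w0 hne0)
  have hl1 : 1 ≤ ℓ := by
    rw [← hl w0 hw0]
    exact G.degree_pos_iff_exists_adj w0 |>.mpr (hadj w0 u0 hne0.symm)
  set S : Finset V := Finset.univ.filter (fun v => v ∈ X') with hS
  have hmemS : ∀ v, v ∈ S ↔ v ∈ X' := by intro v; simp [hS]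
  have hmemSc : ∀ v, v ∈ Sᶜ ↔ v ∉ X' := by intro v; simp [hS]
  -- counting
  have hdeg : ∀ u : V, G.degree u = ∑ v, if G.Adj u v then (1:ℕ) else 0 := by
    intro u
    rw [← SimpleGraph.card_neighborFinset_eq_degree, SimpleGraph.neighborFinset_eq_filter,
      Finset.card_filter]
  have h1 : ∀ u ∈ S, G.degree u = ∑ v ∈ Sᶜ, (if G.Adj u v then (1:ℕ) else 0) := by
    intro u hu
    rw [hdeg]
    refine (Finset.sum_subset (Finset.subset_univ Sᶜ) fun v _ hv => ?_).symm
    rw [hmemSc, not_not] at hv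
    have : ¬ G.Adj u v := fun h => ((hbip u v h).mp ((hmemS u).mp hu)) hv
    simp [this]
  have h2 : ∀ v ∈ Sᶜ, G.degree v = ∑ u ∈ S, (if G.Adj u v then (1:ℕ) else 0) := by
    intro v hv
    rw [hdeg]
    rw [Finset.sum_congr rfl (fun u _ => if_congr (G.adj_comm v u) rfl rfl :
      ∀ u ∈ Finset.univ, (if G.Adj v u then (1:ℕ) else 0) = if G.Adj u v then 1 else 0)]
    refine (Finset.sum_subset (Finset.subset_univ S) fun u _ hu => ?_).symm
    rw [hmemS] at hu
    have : ¬ G.Adj u v := fun h => hu ((hbip u v h).mpr ((hmemSc v).mp hv))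
    simp [this]
  have key : ∑ u ∈ S, G.degree u = ∑ v ∈ Sᶜ, G.degree v := by
    rw [Finset.sum_congr rfl h1, Finset.sum_congr rfl h2, Finset.sum_comm]
  have e1 : ∑ u ∈ S, G.degree u = k * S.card := by
    rw [Finset.sum_congr rfl (fun u hu => hk u ((hmemS u).mp hu)), Finset.sum_const,
      smul_eq_mul, mul_comm]
  have e2 : ∑ v ∈ Sᶜ, G.degree v = ℓ * Sᶜ.card := by
    rw [Finset.sum_congr rfl (fun v hv => hl v ((hmemSc v).mp hv)), Finset.sum_const,
      smul_eq_mul, mul_comm]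
  have hkp : k * S.card = ℓ * Sᶜ.card := by rw [← e1, ← e2, key]
  -- eigen data
  have hkpos : (0:ℝ) < Real.sqrt k := Real.sqrt_pos.mpr (by exact_mod_cast hk1)
  have hlpos : (0:ℝ) < Real.sqrt ℓ := Real.sqrt_pos.mpr (by exact_mod_cast hl1)
  set c : ℝ := Real.sqrt ((k : ℝ) * ℓ) with hc
  set x : V → ℝ := fun v => if v ∈ X' then Real.sqrt k else Real.sqrt ℓ with hxdef
  have hxpos : ∀ v, 0 < x v := by
    intro v; rw [hxdef]; dsimp only; split
    · exact hkpos
    · exact hlpos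
  have hcs : c = Real.sqrt k * Real.sqrt ℓ := Real.sqrt_mul (Nat.cast_nonneg k) _
  have heig : G.adjMatrix ℝ *ᵥ x = c • x := by
    ext u
    rw [SimpleGraph.adjMatrix_mulVec_apply]
    by_cases hu : u ∈ X'
    · have hnb : ∀ v ∈ G.neighborFinset u, x v = Real.sqrt ℓ := by
        intro v hv
        rw [SimpleGraph.mem_neighborFinset] at hv
        have : v ∉ X' := (hbip u v hv).mp hu
        simp [hxdef, this]
      rw [Finset.sum_congr rfl hnb, Finset.sum_const, SimpleGraph.card_neighborFinset_eq_degree,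
        hk u hu]
      have : x u = Real.sqrt k := by simp [hxdef, hu]
      rw [Pi.smul_apply, this, smul_eq_mul, hcs]
      rw [show Real.sqrt k * Real.sqrt ℓ * Real.sqrt k =
        (Real.sqrt k * Real.sqrt k) * Real.sqrt ℓ by ring,
        Real.mul_self_sqrt (Nat.cast_nonneg k)]
      simp [nsmul_eq_mul]
    · have hnb : ∀ v ∈ G.neighborFinset u, x v = Real.sqrt k := by
        intro v hv
        rw [SimpleGraph.mem_neighborFinset] at hv
        have hvin : v ∈ X' := by
          by_contra hvn
          exact hu ((hbip u v hv).mpr hvn)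
        simp [hxdef, hvin]
      rw [Finset.sum_congr rfl hnb, Finset.sum_const, SimpleGraph.card_neighborFinset_eq_degree,
        hl u hu]
      have : x u = Real.sqrt ℓ := by simp [hxdef, hu]
      rw [Pi.smul_apply, this, smul_eq_mul, hcs]
      rw [show Real.sqrt k * Real.sqrt ℓ * Real.sqrt ℓ =
        Real.sqrt k * (Real.sqrt ℓ * Real.sqrt ℓ) by ring,
        Real.mul_self_sqrt (Nat.cast_nonneg ℓ)]
      simp [nsmul_eq_mul, mul_comm]
  have hxne : x ≠ 0 := by
    intro h
    have := congrFun h u0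
    rw [hxdef] at this
    simp only [hu0, if_pos, Pi.zero_apply] at this
    exact absurd this (ne_of_gt hkpos)
  have hdet : (c • (1 : Matrix V V ℝ) - G.adjMatrix ℝ).det = 0 := by
    rw [← Matrix.exists_mulVec_eq_zero_iff]
    refine ⟨x, hxne, ?_⟩
    rw [Matrix.sub_mulVec, Matrix.smul_mulVec, Matrix.one_mulVec, heig, sub_self]
  refine ⟨S.card, Sᶜ.card, ?_, ?_, ?_, hkp, hk1, hl1, ?_, ?_, ?_⟩
  · exact Finset.card_pos.mpr ⟨u0, (hmemS u0).mpr hu0⟩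
  · exact Finset.card_pos.mpr ⟨w0, (hmemSc w0).mpr hw0⟩
  · exact Finset.card_add_card_compl S
  · -- trace
    rw [Matrix.trace]
    have : ∀ v : V, ((G.adjMatrix ℝ) * (G.adjMatrix ℝ)).diag v = (G.degree v : ℝ) := fun v =>
      G.adjMatrix_mul_self_apply_self v
    rw [Finset.sum_congr rfl (fun v _ => this v)]
    rw [show ∑ v : V, (G.degree v : ℝ) = ((∑ v : V, G.degree v : ℕ) : ℝ) by push_cast; ring]
    congr 1
    rw [← Finset.sum_add_sum_compl S, e1, e2]
  · rw [evalCharpoly]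
    exact hdet
  · intro μ hμ
    rw [evalCharpoly] at hμ
    obtain ⟨y, hy, hy0⟩ := (Matrix.exists_mulVec_eq_zero_iff).mpr hμ
    have hAy : G.adjMatrix ℝ *ᵥ y = μ • y := by
      rw [Matrix.sub_mulVec, Matrix.smul_mulVec, Matrix.one_mulVec, sub_eq_zero] at hy0
      exact hy0.symm
    exact perronBound (G.adjMatrix ℝ) (G.transpose_adjMatrix)
      (fun i j => by simp [SimpleGraph.adjMatrix_apply]; split <;> norm_num)
      hxpos heig hy hAy

/-- If `Γ` is a connected bipartite `(k,ℓ)`-semiregular graph and `Δ` a connected bipartite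
`(k̄,ℓ̄)`-semiregular graph (with both parts nonempty), `Γ` and `Δ` are cospectral, and
`(k,ℓ) ≠ (k̄,ℓ̄)`, then `k = ℓ̄` and `ℓ = k̄`. -/
theorem stmt_10 {V W : Type} [Fintype V] [DecidableEq V] [Fintype W] [DecidableEq W]
    (G : SimpleGraph V) [DecidableRel G.Adj] (H : SimpleGraph W) [DecidableRel H.Adj]
    (hGconn : G.Connected) (hHconn : H.Connected)
    (X' : Set V) (Y' : Set W)
    (hX : X'.Nonempty) (hXc : X'ᶜ.Nonempty) (hY : Y'.Nonempty) (hYc : Y'ᶜ.Nonempty)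
    (hbipG : ∀ u v, G.Adj u v → (u ∈ X' ↔ v ∉ X'))
    (hbipH : ∀ u v, H.Adj u v → (u ∈ Y' ↔ v ∉ Y'))
    (k ℓ kb ℓb : ℕ)
    (hk : ∀ v ∈ X', G.degree v = k) (hl : ∀ v, v ∉ X' → G.degree v = ℓ)
    (hkb : ∀ v ∈ Y', H.degree v = kb) (hlb : ∀ v, v ∉ Y' → H.degree v = ℓb)
    (hcospec : (G.adjMatrix ℝ).charpoly = (H.adjMatrix ℝ).charpoly)
    (hne : (k, ℓ) ≠ (kb, ℓb)) :
    k = ℓb ∧ ℓ = kb := by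
  obtain ⟨p, q, hp, hq, hpq, hkp, hk1, hl1, htr, hev, hbd⟩ :=
    sideFacts G hGconn X' hX hXc hbipG k ℓ hk hl
  obtain ⟨pb, qb, hpb, hqb, hpqb, hkpb, hkb1, hlb1, htrb, hevb, hbdb⟩ :=
    sideFacts H hHconn Y' hY hYc hbipH kb ℓb hkb hlb
  -- card equality
  have hcard : Fintype.card V = Fintype.card W := by
    rw [← Matrix.charpoly_natDegree_eq_dim (G.adjMatrix ℝ), hcospec,
      Matrix.charpoly_natDegree_eq_dim]
  -- largest eigenvalue equality
  have hs1 : Real.sqrt ((k : ℝ) * ℓ) ≤ Real.sqrt ((kb : ℝ) * ℓb) := by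
    have := hbdb _ (by rw [← hcospec]; exact hev)
    exact le_trans (le_abs_self _) this
  have hs2 : Real.sqrt ((kb : ℝ) * ℓb) ≤ Real.sqrt ((k : ℝ) * ℓ) := by
    have := hbd _ (by rw [hcospec]; exact hevb)
    exact le_trans (le_abs_self _) this
  have hprod : (k : ℝ) * ℓ = (kb : ℝ) * ℓb := by
    have hs : Real.sqrt ((k : ℝ) * ℓ) = Real.sqrt ((kb : ℝ) * ℓb) := le_antisymm hs1 hs2
    have hnn1 : (0:ℝ) ≤ (k : ℝ) * ℓ := by positivity
    have hnn2 : (0:ℝ) ≤ (kb : ℝ) * ℓb := by positivity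
    rw [← Real.sq_sqrt hnn1, ← Real.sq_sqrt hnn2, hs]
  -- trace equality via equality of eigenvalue multisets
  have hA : (G.adjMatrix ℝ).IsHermitian := by
    unfold Matrix.IsHermitian
    ext i j
    simp [Matrix.conjTranspose_apply, SimpleGraph.adjMatrix_apply, SimpleGraph.adj_comm]
  have hB : (H.adjMatrix ℝ).IsHermitian := by
    unfold Matrix.IsHermitian
    ext i j
    simp [Matrix.conjTranspose_apply, SimpleGraph.adjMatrix_apply, SimpleGraph.adj_comm]
  have rootsEq : ∀ {n : Type} [Fintype n] [DecidableEq n] {M : Matrix n n ℝ}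
      (hM : M.IsHermitian), M.charpoly.roots = Finset.univ.val.map hM.eigenvalues := by
    intro n _ _ M hM
    rw [charpolyHerm hM]
    rw [show ∏ i, (X - C (hM.eigenvalues i)) =
      ((Finset.univ.val.map hM.eigenvalues).map (fun a => X - C a)).prod by
        rw [Multiset.map_map]; rfl]
    exact Polynomial.roots_multiset_prod_X_sub_C _
  have hmult : Finset.univ.val.map hA.eigenvalues = Finset.univ.val.map hB.eigenvalues := by
    rw [← rootsEq hA, ← rootsEq hB, hcospec]
  have htreq : ((G.adjMatrix ℝ) * (G.adjMatrix ℝ)).trace =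
      ((H.adjMatrix ℝ) * (H.adjMatrix ℝ)).trace := by
    rw [traceSqHerm hA, traceSqHerm hB]
    rw [show ∑ i, (hA.eigenvalues i)^2 =
      ((Finset.univ.val.map hA.eigenvalues).map (fun t => t^2)).sum by
        rw [Multiset.map_map]; rfl]
    rw [show ∑ i, (hB.eigenvalues i)^2 =
      ((Finset.univ.val.map hB.eigenvalues).map (fun t => t^2)).sum by
        rw [Multiset.map_map]; rfl]
    rw [hmult]
  rw [htr, htrb] at htreq
  -- now pure arithmetic over ℝ
  have hKP : (k : ℝ) * p = (ℓ : ℝ) * q := by exact_mod_cast hkp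
  have hKPb : (kb : ℝ) * pb = (ℓb : ℝ) * qb := by exact_mod_cast hkpb
  have hSum : (k : ℝ) * p + (ℓ : ℝ) * q = (kb : ℝ) * pb + (ℓb : ℝ) * qb := by
    exact_mod_cast htreq
  have hPQ : (p : ℝ) + q = (pb : ℝ) + qb := by
    have : p + q = pb + qb := by rw [hpq, hpqb, hcard]
    exact_mod_cast this
  have hE : (k : ℝ) * p = (kb : ℝ) * pb := by linarith [hKP, hKPb, hSum]
  have hEpos : (0 : ℝ) < (k : ℝ) * p := by
    have h1 : (1 : ℝ) ≤ k := by exact_mod_cast hk1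
    have h2 : (1 : ℝ) ≤ p := by exact_mod_cast hp
    nlinarith
  have hsum1 : ((k : ℝ) + ℓ) * ((k : ℝ) * p) = (k : ℝ) * ℓ * ((p : ℝ) + q) := by
    linear_combination (k : ℝ) * hKP
  have hsum2 : ((kb : ℝ) + ℓb) * ((kb : ℝ) * pb) = (kb : ℝ) * ℓb * ((pb : ℝ) + qb) := by
    linear_combination (kb : ℝ) * hKPb
  have hsumEq : (k : ℝ) + ℓ = (kb : ℝ) + ℓb := by
    have : ((k : ℝ) + ℓ) * ((k : ℝ) * p) = ((kb : ℝ) + ℓb) * ((k : ℝ) * p) := by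
      calc ((k : ℝ) + ℓ) * ((k : ℝ) * p) = (k : ℝ) * ℓ * ((p : ℝ) + q) := hsum1
        _ = (kb : ℝ) * ℓb * ((pb : ℝ) + qb) := by rw [hprod, hPQ]
        _ = ((kb : ℝ) + ℓb) * ((kb : ℝ) * pb) := hsum2.symm
        _ = ((kb : ℝ) + ℓb) * ((k : ℝ) * p) := by rw [hE]
    exact mul_right_cancel₀ (ne_of_gt hEpos) this
  have hfac : ((k : ℝ) - kb) * ((k : ℝ) - ℓb) = 0 := by
    linear_combination (k : ℝ) * hsumEq - hprod
  rcases mul_eq_zero.mp hfac with h | h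
  · exfalso
    have hkk : (k : ℝ) = kb := by linarith [sub_eq_zero.mp h]
    have hll : (ℓ : ℝ) = ℓb := by linarith
    exact hne (Prod.ext (by exact_mod_cast hkk) (by exact_mod_cast hll))
  · have hkl : (k : ℝ) = ℓb := by linarith [sub_eq_zero.mp h]
    have hlk : (ℓ : ℝ) = kb := by linarith
    exact ⟨by exact_mod_cast hkl, by exact_mod_cast hlk⟩
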